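/- arXiv:1403.4135 — 2 statements merged into one kernel-verified Lean document; each statement's English description precedes it below -/
import Mathlib

section
/- The cross Hessian block of the log-likelihood between two distinct component parameter vectors θ_k and θ_h (k ≠ h) equals − Σ_{i=1}^I α_{ki} α_{hi} c_{ki} c_{hi}', where c_{ki} = (b_{ki}', −(1/2)(G' vec(Σ_k^{-1} − b_{ki}b_{ki}'))')'. -/
open Matrix MeasureTheory
open scoped BigOperators Kronecker

noncomputable section

/-- Density of the multivariate Gaussian distribution `N(μ, S)` evaluated at `y`. -/
def gpdf {n : Type*} [Fintype n] [DecidableEq n] (y μ : n → ℝ) (S : Matrix n n ℝ) : ℝ :=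
  (2 * Real.pi) ^ (-(Fintype.card n : ℝ) / 2) * S.det ^ (-(1 : ℝ) / 2) *
    Real.exp (-(1 / 2) * ((y - μ) ⬝ᵥ (S⁻¹ *ᵥ (y - μ))))

/-- Index type for the half-vectorization of a `D × D` matrix. -/
abbrev lowIdx (D : ℕ) := {p : Fin D × Fin D // p.2 ≤ p.1}

/-- Half-vectorization `v(M)` of a square matrix. -/
def vech {D : ℕ} (M : Matrix (Fin D) (Fin D) ℝ) : lowIdx D → ℝ := fun p => M p.1.1 p.1.2

/-- Vectorization `vec(M)` of a square matrix (indexed by pairs). -/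
def vecM {D : ℕ} (M : Matrix (Fin D) (Fin D) ℝ) : Fin D × Fin D → ℝ := fun q => M q.1 q.2

/-- The duplication matrix `G`, satisfying `vec S = G *ᵥ vech S` for symmetric `S`. -/
def dup (D : ℕ) : Matrix (Fin D × Fin D) (lowIdx D) ℝ :=
  Matrix.of fun q p =>
    if (q.1 = p.1.1 ∧ q.2 = p.1.2) ∨ (q.1 = p.1.2 ∧ q.2 = p.1.1) then (1 : ℝ) else 0

/-- The symmetric matrix with prescribed half-vectorization. -/
def unvech {D : ℕ} (v : lowIdx D → ℝ) : Matrix (Fin D) (Fin D) ℝ :=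
  Matrix.of fun i j => if h : j ≤ i then v ⟨(i, j), h⟩ else v ⟨(j, i), le_of_not_ge h⟩

/-- The matrix `b' ⊗ A` (of size `D × D²`), acting on vectorized matrices by
`(kronRow b A) *ᵥ vec S = A * Sᵀ * b`. -/
def kronRow {D : ℕ} (b : Fin D → ℝ) (A : Matrix (Fin D) (Fin D) ℝ) :
    Matrix (Fin D) (Fin D × Fin D) ℝ :=
  Matrix.of fun i q => b q.1 * A i q.2

/-- The continuous linear map `v ↦ g ⬝ᵥ v`. -/
def dotCLM {n : ℕ} (g : Fin n → ℝ) : (Fin n → ℝ) →L[ℝ] ℝ :=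
  ∑ j, g j • ContinuousLinearMap.proj j

/-- Full weight vector of a `K+1`-component mixture with free parameters `p`. -/
def piFull {K : ℕ} (p : Fin K → ℝ) : Fin (K + 1) → ℝ :=
  fun k => if h : (k : ℕ) < K then p ⟨k, h⟩ else 1 - ∑ j, p j

/-- The vectors `a_k`: `(1/π_k) e_k` for `k < K` and `-(1/π_K) 1` for `k = K`. -/
def avec {K : ℕ} (p : Fin K → ℝ) (k : Fin (K + 1)) : Fin K → ℝ :=
  if h : (k : ℕ) < K then (fun j => if j = (⟨k, h⟩ : Fin K) then (p ⟨k, h⟩)⁻¹ else 0)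
  else fun _ => -(1 - ∑ j, p j)⁻¹

lemma aux_diffAt_det {D : ℕ} {A : ℝ → Matrix (Fin D) (Fin D) ℝ} {x : ℝ}
    (hA : ∀ i j, DifferentiableAt ℝ (fun s => A s i j) x) :
    DifferentiableAt ℝ (fun s => (A s).det) x := by
  simp only [Matrix.det_apply']
  exact DifferentiableAt.fun_sum fun σ _ =>
    ((HasFDerivAt.finset_prod (fun i _ => (hA (σ i) i).hasFDerivAt)).differentiableAt).const_mul _

open Polynomial in
lemma aux_hasDerivAt_det {D : ℕ} (M V : Matrix (Fin D) (Fin D) ℝ) (hM : IsUnit M.det) :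
    HasDerivAt (fun s : ℝ => (M + s • V).det) (M.det * (M⁻¹ * V).trace) 0 := by
  set q : Polynomial ℝ := (Matrix.det (1 + (X : ℝ[X]) • (M⁻¹ * V).map C)).divX.divX with hq
  have key : ∀ s : ℝ, (M + s • V).det
      = M.det * (1 + (M⁻¹ * V).trace * s + q.eval s * s ^ 2) := by
    intro s
    have hfac : M + s • V = M * (1 + s • (M⁻¹ * V)) := by
      rw [Matrix.mul_add, Matrix.mul_one, Matrix.mul_smul, Matrix.mul_nonsing_inv_cancel_left _ _ hM]
    rw [hfac, Matrix.det_mul, Matrix.det_one_add_smul]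
  have h1 : HasDerivAt (fun s : ℝ => 1 + (M⁻¹ * V).trace * s + q.eval s * s ^ 2)
      ((M⁻¹ * V).trace) 0 := by
    have ha : HasDerivAt (fun s : ℝ => 1 + (M⁻¹ * V).trace * s) ((M⁻¹ * V).trace) 0 := by
      simpa using ((hasDerivAt_id (0:ℝ)).const_mul ((M⁻¹ * V).trace)).const_add 1
    have hb : HasDerivAt (fun s : ℝ => q.eval s * s ^ 2) 0 0 := by
      simpa using (q.hasDerivAt 0).fun_mul (hasDerivAt_pow 2 (0:ℝ))
    simpa using ha.fun_add hb
  have := h1.const_mul M.det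
  simp only [← key] at this
  simpa using this

lemma aux_entry_diff {D : ℕ} (M V : Matrix (Fin D) (Fin D) ℝ) (p q : Fin D) (x : ℝ) :
    DifferentiableAt ℝ (fun s : ℝ => (M + s • V) p q) x := by
  simp only [Matrix.add_apply, Matrix.smul_apply, smul_eq_mul]
  exact (differentiableAt_const _).add ((differentiableAt_id.mul (differentiableAt_const _)))

lemma aux_entry_hasDeriv {D : ℕ} (M V : Matrix (Fin D) (Fin D) ℝ) (p q : Fin D) (x : ℝ) :
    HasDerivAt (fun s : ℝ => (M + s • V) p q) (V p q) x := by
  simp only [Matrix.add_apply, Matrix.smul_apply, smul_eq_mul]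
  have : HasDerivAt (fun s : ℝ => M p q + s * V p q) (1 * V p q) x :=
    ((hasDerivAt_id x).mul_const (V p q)).const_add (M p q)
  simpa using this

lemma aux_hasDerivAt_quad {D : ℕ} (e0 d : Fin D → ℝ) (M V : Matrix (Fin D) (Fin D) ℝ)
    (hM : M.PosDef) :
    HasDerivAt (fun s : ℝ => (e0 - s • d) ⬝ᵥ ((M + s • V)⁻¹ *ᵥ (e0 - s • d)))
      (-(2 * ((M⁻¹ *ᵥ e0) ⬝ᵥ d) + (M⁻¹ *ᵥ e0) ⬝ᵥ (V *ᵥ (M⁻¹ *ᵥ e0)))) 0 := by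
  have hdetU : IsUnit M.det := isUnit_iff_ne_zero.mpr hM.det_pos.ne'
  have hMsymm : Mᵀ = M := by
    have := hM.1
    ext i j
    simpa using congrFun (congrFun this i) j
  have hMinvT : M⁻¹ᵀ = M⁻¹ := by rw [Matrix.transpose_nonsing_inv, hMsymm]
  set b := M⁻¹ *ᵥ e0 with hbdef
  -- dot with M⁻¹ trick
  have hdotMinv : ∀ x : Fin D → ℝ, e0 ⬝ᵥ (M⁻¹ *ᵥ x) = b ⬝ᵥ x := by
    intro x
    rw [dotProduct_mulVec, ← hMinvT, Matrix.vecMul_transpose]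
  set dts : ℝ → ℝ := fun s => (M + s • V).det with hdts
  have hdts0 : dts 0 = M.det := by simp [hdts]
  have hdtsdiff : DifferentiableAt ℝ dts 0 :=
    aux_diffAt_det (fun i j => aux_entry_diff M V i j 0)
  have hdts0ne : dts 0 ≠ 0 := by rw [hdts0]; exact hM.det_pos.ne'
  -- eventual invertibility
  have hev : ∀ᶠ s in nhds (0:ℝ), 0 < dts s := by
    have := hdtsdiff.continuousAt.eventually_mem (Ioi_mem_nhds (by rw [hdts0]; exact hM.det_pos))
    simpa [Set.mem_Ioi] using this
  -- adjugate entries differentiable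
  have hadj : ∀ i j : Fin D, DifferentiableAt ℝ (fun s : ℝ => (M + s • V).adjugate i j) 0 := by
    intro i j
    simp only [Matrix.adjugate_apply]
    apply aux_diffAt_det
    intro p q
    by_cases hpj : p = j
    · simp only [Matrix.updateRow_apply, hpj, if_true]
      exact differentiableAt_const _
    · simp only [Matrix.updateRow_apply, hpj, if_false]
      exact aux_entry_diff M V p q 0
  set N : ℝ → Fin D → ℝ := fun s => (M + s • V).adjugate *ᵥ (e0 - s • d) with hN
  have hNdiff : ∀ j, DifferentiableAt ℝ (fun s => N s j) 0 := by
    intro j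
    simp only [hN, Matrix.mulVec, dotProduct]
    apply DifferentiableAt.fun_sum
    intro q _
    exact (hadj j q).mul (((differentiableAt_id.mul (differentiableAt_const _)).const_sub _))
  set u : ℝ → Fin D → ℝ := fun s => (M + s • V)⁻¹ *ᵥ (e0 - s • d) with hu
  have hu_eq : ∀ s j, u s j = (dts s)⁻¹ * N s j := by
    intro s j
    show ((M + s • V)⁻¹ *ᵥ (e0 - s • d)) j = _
    rw [Matrix.inv_def, Ring.inverse_eq_inv, Matrix.smul_mulVec]
    simp [hdts, hN, smul_eq_mul]
  have hudiff : ∀ j, DifferentiableAt ℝ (fun s => u s j) 0 := by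
    intro j
    have : (fun s => u s j) = fun s => (dts s)⁻¹ * N s j := funext fun s => hu_eq s j
    rw [this]
    exact (hdtsdiff.inv hdts0ne).mul (hNdiff j)
  set u' : Fin D → ℝ := fun j => deriv (fun s => u s j) 0 with hu'
  have hu'at : ∀ j, HasDerivAt (fun s => u s j) (u' j) 0 := fun j =>
    (hudiff j).hasDerivAt
  have hu0 : u 0 = b := by
    simp [hu, hbdef]
  -- identity eventually
  have hid : ∀ i : Fin D, (fun s : ℝ => ∑ j, (M + s • V) i j * u s j)
      =ᶠ[nhds (0:ℝ)] (fun s => e0 i - s * d i) := by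
    intro i
    filter_upwards [hev] with s hs
    have hinv : IsUnit (M + s • V).det := isUnit_iff_ne_zero.mpr hs.ne'
    have : (M + s • V) *ᵥ u s = e0 - s • d := by
      rw [hu, Matrix.mulVec_mulVec, Matrix.mul_nonsing_inv _ hinv, Matrix.one_mulVec]
    have := congrFun this i
    simpa [Matrix.mulVec, dotProduct, Pi.sub_apply, Pi.smul_apply, smul_eq_mul] using this
  have hL : ∀ i, HasDerivAt (fun s : ℝ => ∑ j, (M + s • V) i j * u s j)
      (∑ j, (V i j * u 0 j + M i j * u' j)) 0 := by
    intro i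
    apply HasDerivAt.fun_sum
    intro j _
    have := (aux_entry_hasDeriv M V i j 0).fun_mul (hu'at j)
    simpa using this
  have hR : ∀ i, HasDerivAt (fun s : ℝ => e0 i - s * d i) (-d i) 0 := by
    intro i
    simpa using ((hasDerivAt_id (0:ℝ)).mul_const (d i)).const_sub (e0 i) |>.congr_deriv (by ring)
  have hkey : ∀ i, ∑ j, (V i j * u 0 j + M i j * u' j) = -d i := by
    intro i
    exact (hL i).unique ((hR i).congr_of_eventuallyEq (hid i))
  have hMu' : M *ᵥ u' = -d - V *ᵥ b := by
    funext i
    have h1 := hkey i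
    rw [Finset.sum_add_distrib] at h1
    have h2 : ∑ j, V i j * u 0 j = (V *ᵥ b) i := by rw [← hu0]; rfl
    have h3 : (M *ᵥ u') i = ∑ j, M i j * u' j := rfl
    rw [h2] at h1
    rw [h3]
    simp only [Pi.sub_apply, Pi.neg_apply]
    linarith [h1]
  have hcanc : M⁻¹ *ᵥ (M *ᵥ u') = u' := by
    rw [Matrix.mulVec_mulVec, Matrix.nonsing_inv_mul _ hdetU, Matrix.one_mulVec]
  have hu'eq : u' = M⁻¹ *ᵥ (-d - V *ᵥ b) := by rw [← hMu', hcanc]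
  have hq : HasDerivAt (fun s : ℝ => ∑ j, (e0 j - s * d j) * u s j)
      (∑ j, (-d j * u 0 j + e0 j * u' j)) 0 := by
    apply HasDerivAt.fun_sum
    intro j _
    have he : HasDerivAt (fun s : ℝ => e0 j - s * d j) (-d j) 0 := hR j
    have := he.fun_mul (hu'at j)
    simpa using this
  have hfun : (fun s : ℝ => (e0 - s • d) ⬝ᵥ ((M + s • V)⁻¹ *ᵥ (e0 - s • d)))
      = fun s : ℝ => ∑ j, (e0 j - s * d j) * u s j := by
    funext s
    simp [dotProduct, hu, Pi.sub_apply, Pi.smul_apply, smul_eq_mul]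
  rw [hfun]
  convert hq using 1
  rw [hu0] at hq ⊢
  have hsum : ∑ j, (-d j * b j + e0 j * u' j) = -(d ⬝ᵥ b) + e0 ⬝ᵥ u' := by
    rw [Finset.sum_add_distrib]
    have h9 : ∑ j, -d j * b j = -(d ⬝ᵥ b) := by simp [dotProduct]
    rw [h9]
    rfl
  rw [hsum, hu'eq, hdotMinv, dotProduct_sub, dotProduct_neg]
  rw [dotProduct_comm d b]
  ring

lemma aux_hasDerivAt_gpdf {D : ℕ} (y μ d : Fin D → ℝ) (M V : Matrix (Fin D) (Fin D) ℝ)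
    (hM : M.PosDef) :
    HasDerivAt (fun s : ℝ => gpdf y (μ + s • d) (M + s • V))
      (gpdf y μ M * ((M⁻¹ *ᵥ (y - μ)) ⬝ᵥ d - (1/2) * (M⁻¹ * V).trace
        + (1/2) * ((M⁻¹ *ᵥ (y - μ)) ⬝ᵥ (V *ᵥ (M⁻¹ *ᵥ (y - μ)))))) 0 := by
  have hdetU : IsUnit M.det := isUnit_iff_ne_zero.mpr hM.det_pos.ne'
  set e0 := y - μ with he0
  set C : ℝ := (2 * Real.pi) ^ (-(Fintype.card (Fin D) : ℝ) / 2) with hC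
  set p : ℝ := -(1:ℝ)/2 with hp
  set tr := (M⁻¹ * V).trace with htr
  set b := M⁻¹ *ᵥ e0 with hb
  set q' : ℝ := -(2 * (b ⬝ᵥ d) + b ⬝ᵥ (V *ᵥ b)) with hq'
  have hdet : HasDerivAt (fun s : ℝ => (M + s • V).det) (M.det * tr) 0 :=
    aux_hasDerivAt_det M V hdetU
  have hdet0 : (M + (0:ℝ) • V).det = M.det := by simp
  have hdetne : (M + (0:ℝ) • V).det ≠ 0 := by rw [hdet0]; exact hM.det_pos.ne'
  have hrpow : HasDerivAt (fun s : ℝ => (M + s • V).det ^ p)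
      ((M.det * tr) * p * M.det ^ (p - 1)) 0 := by
    have := hdet.rpow_const (p := p) (Or.inl hdetne)
    rwa [hdet0] at this
  have hquad : HasDerivAt (fun s : ℝ => (e0 - s • d) ⬝ᵥ ((M + s • V)⁻¹ *ᵥ (e0 - s • d))) q' 0 := by
    exact aux_hasDerivAt_quad e0 d M V hM
  have hexp : HasDerivAt (fun s : ℝ => Real.exp (-(1/2 : ℝ) *
      ((e0 - s • d) ⬝ᵥ ((M + s • V)⁻¹ *ᵥ (e0 - s • d)))))
      (Real.exp (-(1/2 : ℝ) * (e0 ⬝ᵥ (M⁻¹ *ᵥ e0))) * (-(1/2 : ℝ) * q')) 0 := by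
    have := (hquad.const_mul (-(1/2 : ℝ))).exp
    simpa using this
  have hfull := (hrpow.const_mul C).fun_mul hexp
  have hfn : (fun s : ℝ => gpdf y (μ + s • d) (M + s • V))
      = fun s : ℝ => C * (M + s • V).det ^ p *
        Real.exp (-(1/2 : ℝ) * ((e0 - s • d) ⬝ᵥ ((M + s • V)⁻¹ *ᵥ (e0 - s • d)))) := by
    funext s
    have : y - (μ + s • d) = e0 - s • d := by rw [he0]; abel
    rw [gpdf, this]
  rw [hfn]
  refine hfull.congr_deriv ?_
  have hE : gpdf y μ M = C * M.det ^ p * Real.exp (-(1/2 : ℝ) * (e0 ⬝ᵥ (M⁻¹ *ᵥ e0))) := by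
    rw [gpdf, he0, hC, hp]
  have hpow : M.det ^ (p - 1) * M.det = M.det ^ p := by
    rw [← Real.rpow_add_one hM.det_pos.ne']
    norm_num [hp]
  have key : M.det * tr * p * M.det ^ (p - 1) = M.det ^ p * (p * tr) := by
    rw [← hpow]; ring
  simp only [zero_smul, add_zero, sub_zero, hE, key, hq']
  rw [hp]
  ring

lemma unvech_symm {D : ℕ} (v : lowIdx D → ℝ) (i j : Fin D) : unvech v i j = unvech v j i := by
  unfold unvech
  simp only [Matrix.of_apply]
  by_cases h1 : j ≤ i <;> by_cases h2 : i ≤ j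
  · have : i = j := le_antisymm h2 h1
    subst this; rfl
  · simp [h1, h2]
  · simp [h1, h2]
  · exact absurd (le_of_not_ge h1) h2

lemma dup_dot {D : ℕ} (v : lowIdx D → ℝ) (q : Fin D × Fin D) :
    ∑ p : lowIdx D, dup D q p * v p = unvech v q.1 q.2 := by
  by_cases hq : q.2 ≤ q.1
  · rw [Finset.sum_eq_single (⟨(q.1, q.2), hq⟩ : lowIdx D)]
    · simp [dup, unvech, hq]
    · intro p _ hp
      obtain ⟨⟨p1, p2⟩, hple⟩ := p
      have : dup D q (⟨(p1, p2), hple⟩ : lowIdx D) = 0 := by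
        rw [dup]
        simp only [Matrix.of_apply, ite_eq_right_iff]
        intro hcon
        exfalso; apply hp
        rcases hcon with ⟨h1, h2⟩ | ⟨h1, h2⟩
        · subst h1; subst h2; rfl
        · subst h1; subst h2
          have hq12 : q.1 = q.2 := le_antisymm hple hq
          apply Subtype.ext
          show (q.2, q.1) = (q.1, q.2)
          rw [hq12]
      rw [this, zero_mul]
    · intro hmem; exact absurd (Finset.mem_univ _) hmem
  · rw [Finset.sum_eq_single (⟨(q.2, q.1), le_of_not_ge hq⟩ : lowIdx D)]
    · simp [dup, unvech, hq]
    · intro p _ hp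
      obtain ⟨⟨p1, p2⟩, hple⟩ := p
      have : dup D q (⟨(p1, p2), hple⟩ : lowIdx D) = 0 := by
        rw [dup]
        simp only [Matrix.of_apply, ite_eq_right_iff]
        intro hcon
        exfalso; apply hp
        rcases hcon with ⟨h1, h2⟩ | ⟨h1, h2⟩
        · subst h1; subst h2; exact absurd hple hq
        · subst h1; subst h2; rfl
      rw [this, zero_mul]
    · intro hmem; exact absurd (Finset.mem_univ _) hmem

lemma cdot_eq {D : ℕ} (A : Matrix (Fin D) (Fin D) ℝ) (bb dl : Fin D → ℝ) (dv : lowIdx D → ℝ) :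
    (Sum.elim bb (fun r => (-(1/2 : ℝ)) *
        (((dup D)ᵀ *ᵥ vecM (A - vecMulVec bb bb)) r)) ⬝ᵥ Sum.elim dl dv)
    = bb ⬝ᵥ dl - (1/2 : ℝ) * (A * unvech dv).trace
      + (1/2 : ℝ) * (bb ⬝ᵥ (unvech dv *ᵥ bb)) := by
  set M := A - vecMulVec bb bb with hM
  rw [dotProduct, Fintype.sum_sum_type]
  simp only [Sum.elim_inl, Sum.elim_inr]
  have h1 : ∑ j : Fin D, bb j * dl j = bb ⬝ᵥ dl := rfl
  have key : ∀ (W : Matrix (Fin D) (Fin D) ℝ), ∑ r : lowIdx D, ((dup D)ᵀ *ᵥ vecM W) r * dv r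
      = ∑ q : Fin D × Fin D, W q.1 q.2 * unvech dv q.1 q.2 := by
    intro W
    have : ∀ r : lowIdx D, ((dup D)ᵀ *ᵥ vecM W) r = ∑ q : Fin D × Fin D, dup D q r * vecM W q := by
      intro r
      simp [Matrix.mulVec, dotProduct, Matrix.transpose_apply]
    calc ∑ r : lowIdx D, ((dup D)ᵀ *ᵥ vecM W) r * dv r
        = ∑ r : lowIdx D, ∑ q : Fin D × Fin D, dup D q r * vecM W q * dv r := by
          apply Finset.sum_congr rfl; intro r _; rw [this r, Finset.sum_mul]
      _ = ∑ q : Fin D × Fin D, ∑ r : lowIdx D, dup D q r * vecM W q * dv r :=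
          Finset.sum_comm
      _ = ∑ q : Fin D × Fin D, W q.1 q.2 * unvech dv q.1 q.2 := by
          apply Finset.sum_congr rfl; intro q _
          have hre : ∀ r : lowIdx D, dup D q r * vecM W q * dv r
              = vecM W q * (dup D q r * dv r) := by intro r; ring
          simp only [hre]
          rw [← Finset.mul_sum, dup_dot dv q]
          unfold vecM; ring
  have h2 : ∑ r : lowIdx D, (-(1/2 : ℝ)) * ((dup D)ᵀ *ᵥ vecM M) r * dv r
      = (-(1/2 : ℝ)) * ∑ q : Fin D × Fin D, M q.1 q.2 * unvech dv q.1 q.2 := by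
    rw [← key M, Finset.mul_sum]
    apply Finset.sum_congr rfl; intro r _; ring
  rw [h1, h2]
  have h3 : ∑ q : Fin D × Fin D, M q.1 q.2 * unvech dv q.1 q.2
      = (A * unvech dv).trace - bb ⬝ᵥ (unvech dv *ᵥ bb) := by
    rw [hM]
    have hsplit : ∀ q : Fin D × Fin D, (A - vecMulVec bb bb) q.1 q.2 * unvech dv q.1 q.2
        = A q.1 q.2 * unvech dv q.1 q.2 - bb q.1 * bb q.2 * unvech dv q.1 q.2 := by
      intro q; simp [Matrix.sub_apply, Matrix.vecMulVec_apply]; ring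
    simp only [hsplit]
    rw [Finset.sum_sub_distrib]
    congr 1
    · rw [Matrix.trace]
      rw [Fintype.sum_prod_type]
      apply Finset.sum_congr rfl
      intro i _
      simp only [Matrix.diag_apply, Matrix.mul_apply]
      apply Finset.sum_congr rfl
      intro j _
      rw [unvech_symm dv j i]
    · rw [dotProduct]
      rw [Fintype.sum_prod_type]
      apply Finset.sum_congr rfl
      intro i _
      rw [Matrix.mulVec, dotProduct, Finset.mul_sum]
      apply Finset.sum_congr rfl
      intro j _
      ring
  rw [h3]
  ring

lemma gpdf_pos {D : ℕ} (y0 μ0 : Fin D → ℝ) (M : Matrix (Fin D) (Fin D) ℝ)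
    (h : 0 < M.det) : 0 < gpdf y0 μ0 M := by
  unfold gpdf
  apply mul_pos (mul_pos _ _) (Real.exp_pos _)
  · apply Real.rpow_pos_of_pos
    positivity
  · exact Real.rpow_pos_of_pos h _

/-- cross Hessian block between distinct component parameters `θ_k`, `θ_h`:
`∂²l/∂θ_k∂θ_h' = −∑ᵢ α_{ki} α_{hi} c_{ki} c_{hi}'`. -/
theorem stmt_12 (D P K I : ℕ) (w : Fin K → ℝ) (hw : ∀ k', 0 < w k') (hws : ∑ k', w k' = 1)
    (lam : Fin K → Fin D → ℝ) (S : Fin K → Matrix (Fin D) (Fin D) ℝ)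
    (hS : ∀ k', (S k').PosDef)
    (β : Fin P → ℝ) (X : Fin I → Matrix (Fin P) (Fin D) ℝ) (y : Fin I → Fin D → ℝ)
    (k h : Fin K) (hkh : k ≠ h)
    (α : Fin K → Fin I → ℝ)
    (hα : ∀ k' i, α k' i =
      w k' * gpdf (y i) (lam k' + (X i)ᵀ *ᵥ β) (S k') /
        ∑ l, w l * gpdf (y i) (lam l + (X i)ᵀ *ᵥ β) (S l))
    (b : Fin K → Fin I → Fin D → ℝ)
    (hb : ∀ k' i, b k' i = (S k')⁻¹ *ᵥ (y i - (lam k' + (X i)ᵀ *ᵥ β)))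
    (c : Fin K → Fin I → (Fin D ⊕ lowIdx D) → ℝ)
    (hc : ∀ k' i, c k' i = Sum.elim (b k' i)
      (fun q => (-(1 / 2 : ℝ)) *
        (((dup D)ᵀ *ᵥ vecM ((S k')⁻¹ - vecMulVec (b k' i) (b k' i))) q)))
    (dlk dlh : Fin D → ℝ) (dvk dvh : lowIdx D → ℝ) :
    deriv (fun t : ℝ => deriv (fun s : ℝ =>
      ∑ i, Real.log (∑ k', w k' * gpdf (y i)
        ((Function.update (Function.update lam k (lam k + s • dlk)) h
            (lam h + t • dlh)) k' + (X i)ᵀ *ᵥ β)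
        ((Function.update (Function.update S k (S k + s • unvech dvk)) h
            (S h + t • unvech dvh)) k'))) 0) 0 =
      -(∑ i, α k i * α h i *
        ((c k i ⬝ᵥ Sum.elim dlk dvk) * (c h i ⬝ᵥ Sum.elim dlh dvh))) := by
  classical
  set Vk := unvech dvk with hVk
  set Vh := unvech dvh with hVh
  set G : Fin K → Fin I → ℝ := fun l i => gpdf (y i) (lam l + (X i)ᵀ *ᵥ β) (S l) with hG
  set Lk : Fin I → ℝ := fun i =>
    ((S k)⁻¹ *ᵥ (y i - (lam k + (X i)ᵀ *ᵥ β))) ⬝ᵥ dlk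
      - (1/2 : ℝ) * ((S k)⁻¹ * Vk).trace
      + (1/2 : ℝ) * (((S k)⁻¹ *ᵥ (y i - (lam k + (X i)ᵀ *ᵥ β))) ⬝ᵥ
          (Vk *ᵥ ((S k)⁻¹ *ᵥ (y i - (lam k + (X i)ᵀ *ᵥ β))))) with hLk
  set Lh : Fin I → ℝ := fun i =>
    ((S h)⁻¹ *ᵥ (y i - (lam h + (X i)ᵀ *ᵥ β))) ⬝ᵥ dlh
      - (1/2 : ℝ) * ((S h)⁻¹ * Vh).trace
      + (1/2 : ℝ) * (((S h)⁻¹ *ᵥ (y i - (lam h + (X i)ᵀ *ᵥ β))) ⬝ᵥ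
          (Vh *ᵥ ((S h)⁻¹ *ᵥ (y i - (lam h + (X i)ᵀ *ᵥ β))))) with hLh
  have hcLk : ∀ i, c k i ⬝ᵥ Sum.elim dlk dvk = Lk i := by
    intro i
    rw [hc k i]
    simp only [hb k i]
    exact cdot_eq _ _ _ _
  have hcLh : ∀ i, c h i ⬝ᵥ Sum.elim dlh dvh = Lh i := by
    intro i
    rw [hc h i]
    simp only [hb h i]
    exact cdot_eq _ _ _ _
  have hgk : ∀ i, HasDerivAt
      (fun s : ℝ => gpdf (y i) ((lam k + (X i)ᵀ *ᵥ β) + s • dlk) (S k + s • Vk))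
      (G k i * Lk i) 0 :=
    fun i => aux_hasDerivAt_gpdf (y i) (lam k + (X i)ᵀ *ᵥ β) dlk (S k) Vk (hS k)
  have hgh : ∀ i, HasDerivAt
      (fun t : ℝ => gpdf (y i) ((lam h + (X i)ᵀ *ᵥ β) + t • dlh) (S h + t • Vh))
      (G h i * Lh i) 0 :=
    fun i => aux_hasDerivAt_gpdf (y i) (lam h + (X i)ᵀ *ᵥ β) dlh (S h) Vh (hS h)
  set Ck : Fin I → ℝ := fun i => ∑ l ∈ (Finset.univ.erase k).erase h, w l * G l i with hCk
  have hCk_nonneg : ∀ i, 0 ≤ Ck i := by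
    intro i
    apply Finset.sum_nonneg
    intro l _
    exact le_of_lt (mul_pos (hw l) (gpdf_pos _ _ _ (hS l).det_pos))
  have hdec : ∀ (i : Fin I) (s t : ℝ),
      (∑ k', w k' * gpdf (y i)
        ((Function.update (Function.update lam k (lam k + s • dlk)) h
            (lam h + t • dlh)) k' + (X i)ᵀ *ᵥ β)
        ((Function.update (Function.update S k (S k + s • Vk)) h
            (S h + t • Vh)) k'))
      = w k * gpdf (y i) ((lam k + (X i)ᵀ *ᵥ β) + s • dlk) (S k + s • Vk)
        + (w h * gpdf (y i) ((lam h + (X i)ᵀ *ᵥ β) + t • dlh) (S h + t • Vh) + Ck i) := by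
    intro i s t
    rw [← Finset.add_sum_erase _ _ (Finset.mem_univ k),
      ← Finset.add_sum_erase _ _ (Finset.mem_erase.mpr ⟨Ne.symm hkh, Finset.mem_univ h⟩)]
    have e1 : Function.update (Function.update lam k (lam k + s • dlk)) h
        (lam h + t • dlh) k = lam k + s • dlk := by
      rw [Function.update_of_ne hkh, Function.update_self]
    have e2 : Function.update (Function.update S k (S k + s • Vk)) h
        (S h + t • Vh) k = S k + s • Vk := by
      rw [Function.update_of_ne hkh, Function.update_self]
    rw [e1, e2, Function.update_self, Function.update_self]
    have e3 : (lam k + s • dlk) + (X i)ᵀ *ᵥ β = (lam k + (X i)ᵀ *ᵥ β) + s • dlk :=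
      add_right_comm _ _ _
    have e4 : (lam h + t • dlh) + (X i)ᵀ *ᵥ β = (lam h + (X i)ᵀ *ᵥ β) + t • dlh :=
      add_right_comm _ _ _
    rw [e3, e4]
    congr 1
    congr 1
    apply Finset.sum_congr rfl
    intro l hl
    rw [Finset.mem_erase] at hl
    obtain ⟨hlh, hl2⟩ := hl
    rw [Finset.mem_erase] at hl2
    obtain ⟨hlk, -⟩ := hl2
    rw [Function.update_of_ne hlh, Function.update_of_ne hlk,
      Function.update_of_ne hlh, Function.update_of_ne hlk]
  set m : Fin I → ℝ := fun i => w k * G k i + (w h * G h i + Ck i) with hm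
  have hm_pos : ∀ i, 0 < m i := by
    intro i
    have h1 : 0 < w k * G k i := mul_pos (hw k) (gpdf_pos _ _ _ (hS k).det_pos)
    have h2 : 0 < w h * G h i := mul_pos (hw h) (gpdf_pos _ _ _ (hS h).det_pos)
    have := hCk_nonneg i
    simp only [hm]
    linarith
  have hm_eq : ∀ i, (∑ l, w l * gpdf (y i) (lam l + (X i)ᵀ *ᵥ β) (S l)) = m i := by
    intro i
    have := hdec i 0 0
    simp only [zero_smul, add_zero, Function.update_eq_self] at this
    simp only [hm, hG]
    exact this
  -- inner derivative for t near 0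
  have hstep : ∀ t : ℝ, 0 < (S h + t • Vh).det →
      deriv (fun s : ℝ => ∑ i, Real.log (∑ k', w k' * gpdf (y i)
        ((Function.update (Function.update lam k (lam k + s • dlk)) h
            (lam h + t • dlh)) k' + (X i)ᵀ *ᵥ β)
        ((Function.update (Function.update S k (S k + s • Vk)) h
            (S h + t • Vh)) k'))) 0
      = ∑ i, (w k * (G k i * Lk i)) /
          (w k * G k i
            + (w h * gpdf (y i) ((lam h + (X i)ᵀ *ᵥ β) + t • dlh) (S h + t • Vh) + Ck i)) := by
    intro t ht
    apply HasDerivAt.deriv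
    simp only [hdec]
    apply HasDerivAt.fun_sum
    intro i _
    have hA : HasDerivAt (fun s : ℝ =>
        w k * gpdf (y i) ((lam k + (X i)ᵀ *ᵥ β) + s • dlk) (S k + s • Vk))
        (w k * (G k i * Lk i)) 0 := (hgk i).const_mul (w k)
    have hB := hA.add_const
      (w h * gpdf (y i) ((lam h + (X i)ᵀ *ᵥ β) + t • dlh) (S h + t • Vh) + Ck i)
    have hval : w k * gpdf (y i) ((lam k + (X i)ᵀ *ᵥ β) + (0:ℝ) • dlk) (S k + (0:ℝ) • Vk)
        + (w h * gpdf (y i) ((lam h + (X i)ᵀ *ᵥ β) + t • dlh) (S h + t • Vh) + Ck i)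
        = w k * G k i
        + (w h * gpdf (y i) ((lam h + (X i)ᵀ *ᵥ β) + t • dlh) (S h + t • Vh) + Ck i) := by
      simp [hG]
    have hpos : 0 < w k * G k i
        + (w h * gpdf (y i) ((lam h + (X i)ᵀ *ᵥ β) + t • dlh) (S h + t • Vh) + Ck i) := by
      have h1 : 0 < w k * G k i := mul_pos (hw k) (gpdf_pos _ _ _ (hS k).det_pos)
      have h2 : 0 < w h * gpdf (y i) ((lam h + (X i)ᵀ *ᵥ β) + t • dlh) (S h + t • Vh) :=
        mul_pos (hw h) (gpdf_pos _ _ _ ht)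
      have := hCk_nonneg i
      linarith
    have := hB.log (by rw [hval]; exact hpos.ne')
    rw [hval] at this
    exact this
  -- eventual positivity of the h-determinant
  have hev : ∀ᶠ t in nhds (0:ℝ), 0 < (S h + t • Vh).det := by
    have hdiff : DifferentiableAt ℝ (fun t : ℝ => (S h + t • Vh).det) 0 :=
      aux_diffAt_det (fun i j => aux_entry_diff (S h) Vh i j 0)
    have h0 : (S h + (0:ℝ) • Vh).det = (S h).det := by simp
    have := hdiff.continuousAt.eventually_mem
      (Ioi_mem_nhds (by rw [h0]; exact (hS h).det_pos))
    simpa [Set.mem_Ioi] using this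
  have hcongr : (fun t : ℝ => deriv (fun s : ℝ => ∑ i, Real.log (∑ k', w k' * gpdf (y i)
      ((Function.update (Function.update lam k (lam k + s • dlk)) h
          (lam h + t • dlh)) k' + (X i)ᵀ *ᵥ β)
      ((Function.update (Function.update S k (S k + s • Vk)) h
          (S h + t • Vh)) k'))) 0)
      =ᶠ[nhds (0:ℝ)] (fun t : ℝ => ∑ i, (w k * (G k i * Lk i)) /
          (w k * G k i
            + (w h * gpdf (y i) ((lam h + (X i)ᵀ *ᵥ β) + t • dlh) (S h + t • Vh) + Ck i))) := by
    filter_upwards [hev] with t ht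
    exact hstep t ht
  rw [hcongr.deriv_eq]
  -- outer derivative
  have houter : HasDerivAt (fun t : ℝ => ∑ i, (w k * (G k i * Lk i)) /
      (w k * G k i
        + (w h * gpdf (y i) ((lam h + (X i)ᵀ *ᵥ β) + t • dlh) (S h + t • Vh) + Ck i)))
      (∑ i, (0 * m i - (w k * (G k i * Lk i)) * (w h * (G h i * Lh i))) / m i ^ 2) 0 := by
    apply HasDerivAt.fun_sum
    intro i _
    have hden : HasDerivAt (fun t : ℝ => w k * G k i
        + (w h * gpdf (y i) ((lam h + (X i)ᵀ *ᵥ β) + t • dlh) (S h + t • Vh) + Ck i))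
        (w h * (G h i * Lh i)) 0 := by
      exact (((hgh i).const_mul (w h)).add_const (Ck i)).const_add (w k * G k i)
    have hden0 : w k * G k i
        + (w h * gpdf (y i) ((lam h + (X i)ᵀ *ᵥ β) + (0:ℝ) • dlh) (S h + (0:ℝ) • Vh) + Ck i)
        = m i := by
      simp [hm, hG]
    have := (hasDerivAt_const (0:ℝ) (w k * (G k i * Lk i))).div hden (by rw [hden0]; exact (hm_pos i).ne')
    rw [hden0] at this
    exact this
  rw [houter.deriv]
  -- final algebra
  rw [← Finset.sum_neg_distrib]
  apply Finset.sum_congr rfl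
  intro i _
  rw [hcLk i, hcLh i, hα k i, hα h i, hm_eq i]
  have hmne := (hm_pos i).ne'
  field_simp
  ring
end
end

section
/- The second differential of ln f_{ki} for the mixture SUR model equals d² ln f_{ki} = −(dπ)'a_k a_k' dπ − (dβ)'X_i Σ_k^{-1} X_i' dβ − (dθ_k)'F_{ki}' X_i' dβ − (dβ)'X_i F_{ki} dθ_k − (dθ_k)' C_{ki} dθ_k, where F_{ki} = [Σ_k^{-1}, (b_{ki}' ⊗ Σ_k^{-1})G] and C_{ki} is the 2×2 block matrix with blocks Σ_k^{-1}, (b_{ki}' ⊗ Σ_k^{-1})G, G'(b_{ki} ⊗ Σ_k^{-1}), and (1/2)G'[(Σ_k^{-1} − 2B_{ki}) ⊗ Σ_k^{-1}]G. -/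
open Matrix MeasureTheory
open scoped BigOperators Kronecker

noncomputable section

/- ============ auxiliary lemmas ============ -/

attribute [local instance] Matrix.linftyOpNormedAddCommGroup Matrix.linftyOpNormedRing
  Matrix.linftyOpNormedAlgebra

section Aux

variable {D : ℕ} {s : ℝ}

lemma det_line_hasDerivAt (A U : Matrix (Fin D) (Fin D) ℝ) (s : ℝ) :
    HasDerivAt (fun t => (A + t • U).det) (Matrix.trace (Matrix.adjugate (A + s • U) * U)) s := by
  set B := A + s • U with hB
  have key : Matrix.trace (Matrix.adjugate B * U)
      = ∑ σ : Equiv.Perm (Fin D), (Equiv.Perm.sign σ : ℝ) *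
          ∑ i, (∏ j ∈ Finset.univ.erase i, B (σ j) j) * U (σ i) i := by
    have h1 : Matrix.trace (Matrix.adjugate B * U)
        = ∑ i, ((B.updateCol i (fun r => U r i)).det) := by
      rw [Matrix.trace]
      congr 1; ext i
      rw [← Matrix.cramer_apply, Matrix.cramer_eq_adjugate_mulVec]
      simp [Matrix.mul_apply, Matrix.mulVec, dotProduct, Matrix.diag]
    rw [h1]
    have h2 : ∀ i : Fin D, ((B.updateCol i (fun r => U r i)).det)
        = ∑ σ : Equiv.Perm (Fin D), (Equiv.Perm.sign σ : ℝ) *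
            ((∏ j ∈ Finset.univ.erase i, B (σ j) j) * U (σ i) i) := by
      intro i
      rw [Matrix.det_apply']
      congr 1; ext σ
      congr 1
      have : ∀ j : Fin D, (B.updateCol i (fun r => U r i)) (σ j) j
          = if j = i then U (σ j) i else B (σ j) j := by
        intro j; rw [Matrix.updateCol_apply]
      rw [Finset.prod_congr rfl fun j _ => this j]
      rw [← Finset.mul_prod_erase Finset.univ _ (Finset.mem_univ i)]
      simp only [if_pos rfl]
      rw [mul_comm]
      congr 1
      exact Finset.prod_congr rfl fun j hj => if_neg (Finset.ne_of_mem_erase hj)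
    rw [Finset.sum_congr rfl fun i _ => h2 i, Finset.sum_comm]
    congr 1; ext σ
    rw [Finset.mul_sum]
  rw [key]
  have hd : ∀ t : ℝ, (A + t • U).det = ∑ σ : Equiv.Perm (Fin D), (Equiv.Perm.sign σ : ℝ) *
      ∏ i, (A (σ i) i + t * U (σ i) i) := by
    intro t; rw [Matrix.det_apply']
    rfl
  have : HasDerivAt (fun t => ∑ σ : Equiv.Perm (Fin D), (Equiv.Perm.sign σ : ℝ) *
      ∏ i, (A (σ i) i + t * U (σ i) i))
      (∑ σ : Equiv.Perm (Fin D), (Equiv.Perm.sign σ : ℝ) *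
        ∑ i, (∏ j ∈ Finset.univ.erase i, B (σ j) j) * U (σ i) i) s := by
    apply HasDerivAt.fun_sum
    intro σ _
    have := HasDerivAt.fun_finsetProd (u := Finset.univ)
      (f := fun i t => A (σ i) i + t * U (σ i) i) (f' := fun i => U (σ i) i) (x := s)
      (fun i _ => ((hasDerivAt_mul_const (U (σ i) i)).const_add (A (σ i) i)))
    have h2 := this.const_mul ((Equiv.Perm.sign σ : ℝ))
    simp only [smul_eq_mul] at h2
    exact h2
  exact this.congr_of_eventuallyEq (by filter_upwards with t; rw [hd t])

lemma ringInverse_line_hasDerivAt (S U : Matrix (Fin D) (Fin D) ℝ) (s : ℝ)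
    (h : IsUnit (S + s • U)) :
    HasDerivAt (fun t : ℝ => Ring.inverse (S + t • U))
      (-(Ring.inverse (S + s • U) * U * Ring.inverse (S + s • U))) s := by
  obtain ⟨x, hx⟩ := h
  have hline : HasDerivAt (fun t : ℝ => S + t • U) U s := by
    have h := ((hasDerivAt_id s).smul_const U).const_add S
    simp only [id, one_smul] at h
    exact h
  have hinv := hasFDerivAt_ringInverse (𝕜 := ℝ) x
  rw [hx] at hinv
  have := hinv.comp_hasDerivAt s hline
  refine HasDerivAt.congr_deriv this ?_
  simp [ContinuousLinearMap.mulLeftRight_apply, hx, ← Matrix.nonsing_inv_eq_ringInverse,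
    Matrix.inv_inv_of_invertible]

lemma hasDerivAt_entry {M : ℝ → Matrix (Fin D) (Fin D) ℝ} {M' : Matrix (Fin D) (Fin D) ℝ}
    (h : HasDerivAt M M' s) (i j : Fin D) :
    HasDerivAt (fun t => M t i j) (M' i j) s := by
  exact (LinearMap.toContinuousLinearMap
    (Matrix.entryLinearMap ℝ ℝ i j)
    ).hasFDerivAt.comp_hasDerivAt s h

lemma hasDerivAt_trace_mul {M : ℝ → Matrix (Fin D) (Fin D) ℝ} {M' U : Matrix (Fin D) (Fin D) ℝ}
    (h : HasDerivAt M M' s) :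
    HasDerivAt (fun t => Matrix.trace (M t * U)) (Matrix.trace (M' * U)) s := by
  exact (LinearMap.toContinuousLinearMap
    ((Matrix.traceLinearMap (Fin D) ℝ ℝ).comp (LinearMap.mulRight ℝ U))
    ).hasFDerivAt.comp_hasDerivAt s h

lemma hasDerivAt_vMv {v w : ℝ → Fin D → ℝ} {v' w' : Fin D → ℝ}
    {M : ℝ → Matrix (Fin D) (Fin D) ℝ} {M' : Matrix (Fin D) (Fin D) ℝ}
    (hv : ∀ i, HasDerivAt (fun t => v t i) (v' i) s)
    (hw : ∀ i, HasDerivAt (fun t => w t i) (w' i) s)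
    (hM : HasDerivAt M M' s) :
    HasDerivAt (fun t => v t ⬝ᵥ (M t *ᵥ w t))
      (v' ⬝ᵥ (M s *ᵥ w s) + v s ⬝ᵥ (M' *ᵥ w s) + v s ⬝ᵥ (M s *ᵥ w')) s := by
  have key : HasDerivAt (fun t => ∑ i, v t i * ∑ j, M t i j * w t j)
      (∑ i, (v' i * (∑ j, M s i j * w s j) +
        v s i * (∑ j, (M' i j * w s j + M s i j * w' j)))) s := by
    apply HasDerivAt.fun_sum
    intro i _
    exact (hv i).mul (HasDerivAt.fun_sum fun j _ => (hasDerivAt_entry hM i j).mul (hw j))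
  have heq : (fun t => v t ⬝ᵥ (M t *ᵥ w t)) = fun t => ∑ i, v t i * ∑ j, M t i j * w t j := by
    funext t; simp [dotProduct, Matrix.mulVec]
  rw [heq]
  convert key using 1
  simp [dotProduct, Matrix.mulVec, Finset.sum_add_distrib, mul_add, Finset.mul_sum,
    add_assoc]

lemma unvech_transpose (v : lowIdx D → ℝ) : (unvech v)ᵀ = unvech v := by
  ext i j
  simp only [Matrix.transpose_apply, unvech, Matrix.of_apply]
  split_ifs with h1 h2 h3
  · have : i = j := le_antisymm h1 h2
    subst this; rfl
  · rfl
  · rfl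
  · exact absurd (le_of_not_ge h1) h3

lemma dup_mulVec (v : lowIdx D → ℝ) : dup D *ᵥ v = vecM (unvech v) := by
  funext q
  obtain ⟨i, j⟩ := q
  simp only [Matrix.mulVec, dotProduct, dup, Matrix.of_apply, vecM, unvech]
  by_cases h : j ≤ i
  · rw [Finset.sum_eq_single (⟨(i, j), h⟩ : lowIdx D)]
    · simp [h]
    · rintro ⟨⟨a, b⟩, hab⟩ - hne
      simp only [ite_mul, one_mul, zero_mul, ite_eq_right_iff]
      rintro (⟨rfl, rfl⟩ | ⟨rfl, rfl⟩)
      · exact absurd (Subtype.ext rfl) hne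
      · exact absurd (Subtype.ext (Prod.ext (le_antisymm h hab) (le_antisymm hab h))) hne
    · intro h'; exact absurd (Finset.mem_univ _) h'
  · rw [Finset.sum_eq_single (⟨(j, i), le_of_not_ge h⟩ : lowIdx D)]
    · simp [h]
    · rintro ⟨⟨a, b⟩, hab⟩ - hne
      simp only [ite_mul, one_mul, zero_mul, ite_eq_right_iff]
      rintro (⟨rfl, rfl⟩ | ⟨rfl, rfl⟩)
      · exact absurd hab h
      · exact absurd (Subtype.ext rfl) hne
    · intro h'; exact absurd (Finset.mem_univ _) h'

lemma kronRow_mulVec_vecM (b : Fin D → ℝ) (A V : Matrix (Fin D) (Fin D) ℝ) :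
    kronRow b A *ᵥ vecM V = A *ᵥ (Vᵀ *ᵥ b) := by
  funext i
  simp only [Matrix.mulVec, dotProduct, kronRow, Matrix.of_apply, vecM,
    Matrix.transpose_apply]
  rw [Fintype.sum_prod_type, Finset.sum_comm]
  refine Finset.sum_congr rfl fun c _ => ?_
  rw [Finset.mul_sum]
  refine Finset.sum_congr rfl fun r _ => ?_
  ring

lemma kron_quad (Q W A V : Matrix (Fin D) (Fin D) ℝ) :
    vecM A ⬝ᵥ ((Q ⊗ₖ W) *ᵥ vecM V) = Matrix.trace (Qᵀ * (A * W * Vᵀ)) := by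
  have e1 : Matrix.trace (Qᵀ * (A * W * Vᵀ))
      = ∑ k, ∑ i, ∑ l, ∑ j, A i j * (Q i k * W j l * V k l) := by
    simp only [Matrix.trace, Matrix.diag, Matrix.mul_apply, Matrix.transpose_apply]
    refine Finset.sum_congr rfl fun k _ => Finset.sum_congr rfl fun i _ => ?_
    rw [Finset.mul_sum]
    refine Finset.sum_congr rfl fun l _ => ?_
    rw [Finset.sum_mul, Finset.mul_sum]
    refine Finset.sum_congr rfl fun j _ => ?_
    ring
  have e2 : vecM A ⬝ᵥ ((Q ⊗ₖ W) *ᵥ vecM V)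
      = ∑ i, ∑ j, ∑ k, ∑ l, A i j * (Q i k * W j l * V k l) := by
    simp only [dotProduct, Matrix.mulVec, vecM, Matrix.kroneckerMap_apply]
    rw [Fintype.sum_prod_type]
    refine Finset.sum_congr rfl fun i _ => Finset.sum_congr rfl fun j _ => ?_
    rw [Fintype.sum_prod_type, Finset.mul_sum]
    refine Finset.sum_congr rfl fun k _ => ?_
    rw [Finset.mul_sum]
  rw [e1, e2]
  rw [Finset.sum_congr rfl fun i (_ : i ∈ Finset.univ) => Finset.sum_comm]
  rw [Finset.sum_congr rfl fun i (_ : i ∈ Finset.univ) =>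
    Finset.sum_congr rfl fun k (_ : k ∈ Finset.univ) => Finset.sum_comm]
  rw [Finset.sum_comm]

lemma trace_vecMulVec_mul (b : Fin D → ℝ) (M : Matrix (Fin D) (Fin D) ℝ) :
    Matrix.trace (Matrix.vecMulVec b b * M) = b ⬝ᵥ (Mᵀ *ᵥ b) := by
  simp only [Matrix.trace, Matrix.diag, Matrix.mul_apply, Matrix.vecMulVec_apply,
    dotProduct, Matrix.mulVec, Matrix.transpose_apply]
  refine Finset.sum_congr rfl fun i _ => ?_
  rw [Finset.mul_sum]
  refine Finset.sum_congr rfl fun j _ => ?_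
  ring

lemma dot_shuffle {m n : Type*} [Fintype m] [Fintype n] (M : Matrix m n ℝ) (x : m → ℝ)
    (y : n → ℝ) : x ⬝ᵥ (M *ᵥ y) = (Mᵀ *ᵥ x) ⬝ᵥ y := by
  rw [dotProduct_mulVec, Matrix.mulVec_transpose]

lemma dot_sym {M : Matrix (Fin D) (Fin D) ℝ} (h : Mᵀ = M) (x y : Fin D → ℝ) :
    x ⬝ᵥ (M *ᵥ y) = y ⬝ᵥ (M *ᵥ x) := by
  rw [dot_shuffle, h, dotProduct_comm]

lemma vecMulVec_self_transpose (b : Fin D → ℝ) :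
    (Matrix.vecMulVec b b)ᵀ = Matrix.vecMulVec b b := by
  ext i j
  simp [Matrix.vecMulVec_apply, mul_comm]

end Aux

/-- second differential of `ln f_{ki}`:
`d² ln f_{ki} = −(dπ)'a_k a_k' dπ − (dβ)'XᵢΣₖ⁻¹Xᵢ' dβ − (dθ_k)'F_{ki}'Xᵢ' dβ
 − (dβ)'XᵢF_{ki} dθ_k − (dθ_k)'C_{ki} dθ_k` (here `K+1` components, `K` free weights). -/
theorem stmt_19 (D P K I : ℕ) (p : Fin K → ℝ)
    (hp : ∀ j, 0 < p j) (hps : ∑ j, p j < 1)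
    (lam : Fin (K + 1) → Fin D → ℝ)
    (S : Fin (K + 1) → Matrix (Fin D) (Fin D) ℝ) (hS : ∀ k', (S k').PosDef)
    (β : Fin P → ℝ) (X : Fin I → Matrix (Fin P) (Fin D) ℝ) (y : Fin I → Fin D → ℝ)
    (k : Fin (K + 1)) (i : Fin I)
    (b : Fin D → ℝ) (hb : b = (S k)⁻¹ *ᵥ (y i - (lam k + (X i)ᵀ *ᵥ β)))
    (Bm : Matrix (Fin D) (Fin D) ℝ) (hBm : Bm = (S k)⁻¹ - vecMulVec b b)
    (F : Matrix (Fin D) (Fin D ⊕ lowIdx D) ℝ)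
    (hF : F = Matrix.fromCols (S k)⁻¹ (kronRow b (S k)⁻¹ * dup D))
    (C : Matrix (Fin D ⊕ lowIdx D) (Fin D ⊕ lowIdx D) ℝ)
    (hC : C = Matrix.fromBlocks (S k)⁻¹ (kronRow b (S k)⁻¹ * dup D)
      ((dup D)ᵀ * (kronRow b (S k)⁻¹)ᵀ)
      ((1 / 2 : ℝ) • ((dup D)ᵀ * (((S k)⁻¹ - (2 : ℝ) • Bm) ⊗ₖ (S k)⁻¹) * dup D)))
    (dπ : Fin K → ℝ) (dβ : Fin P → ℝ) (dl : Fin D → ℝ) (dv : lowIdx D → ℝ) :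
    iteratedDeriv 2 (fun t : ℝ =>
        Real.log (piFull (p + t • dπ) k *
          gpdf (y i) ((lam k + t • dl) + (X i)ᵀ *ᵥ (β + t • dβ)) (S k + t • unvech dv))) 0 =
      -(avec p k ⬝ᵥ dπ) ^ 2
        - dβ ⬝ᵥ ((X i * (S k)⁻¹ * (X i)ᵀ) *ᵥ dβ)
        - Sum.elim dl dv ⬝ᵥ ((Fᵀ * (X i)ᵀ) *ᵥ dβ)
        - dβ ⬝ᵥ ((X i * F) *ᵥ Sum.elim dl dv)
        - Sum.elim dl dv ⬝ᵥ (C *ᵥ Sum.elim dl dv) := by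
  classical
  set U : Matrix (Fin D) (Fin D) ℝ := unvech dv with hUdef
  set W : Matrix (Fin D) (Fin D) ℝ := (S k)⁻¹ with hWdef
  set r0 : Fin D → ℝ := y i - (lam k + (X i)ᵀ *ᵥ β) with hr0def
  set u : Fin D → ℝ := dl + (X i)ᵀ *ᵥ dβ with hudef
  set r : ℝ → Fin D → ℝ := fun t => r0 - t • u with hrdef
  set N : ℝ → Matrix (Fin D) (Fin D) ℝ := fun t => Ring.inverse (S k + t • U) with hNdef
  set φ : ℝ → ℝ := fun t => (S k + t • U).det with hφdef
  set c : ℝ := if h : (k : ℕ) < K then dπ ⟨k, h⟩ else -∑ j, dπ j with hcdef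
  set π0 : ℝ := piFull p k with hπ0def
  have hDet0 : 0 < (S k).det := (hS k).det_pos
  have hUsym : Uᵀ = U := unvech_transpose dv
  have hSsym : (S k)ᵀ = S k := by
    have h1 := (hS k).1
    rw [Matrix.IsHermitian] at h1
    simpa using h1
  have hWsym : Wᵀ = W := by
    rw [hWdef, Matrix.transpose_nonsing_inv, hSsym]
  have hπ0pos : 0 < π0 := by
    rw [hπ0def, piFull]
    split
    · exact hp _
    · linarith
  have hπt : ∀ t : ℝ, piFull (p + t • dπ) k = π0 + t * c := by
    intro t
    rw [hπ0def, hcdef, piFull, piFull]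
    by_cases h : (k : ℕ) < K
    · simp [h]
    · simp only [dif_neg h, Pi.add_apply, Pi.smul_apply, smul_eq_mul]
      rw [Finset.sum_add_distrib, ← Finset.mul_sum]
      ring
  have ha : avec p k ⬝ᵥ dπ = c / π0 := by
    rw [hcdef, hπ0def, avec, piFull]
    by_cases h : (k : ℕ) < K
    · simp only [dif_pos h, dotProduct, ite_mul, zero_mul]
      rw [Finset.sum_ite_eq' Finset.univ (⟨k, h⟩ : Fin K)]
      simp [div_eq_inv_mul]
    · simp only [dif_neg h, dotProduct]
      rw [div_eq_inv_mul, ← Finset.mul_sum]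
      ring
  have hrt : ∀ t : ℝ, y i - (lam k + t • dl + (X i)ᵀ *ᵥ (β + t • dβ)) = r t := by
    intro t
    funext d
    simp [hrdef, hr0def, hudef, Matrix.mulVec_add, Matrix.mulVec_smul]
    ring
  have hev : ∀ᶠ t in nhds (0 : ℝ), 0 < φ t ∧ 0 < π0 + t * c := by
    have h1 : ContinuousAt φ 0 := (det_line_hasDerivAt (S k) U 0).continuousAt
    have hφ0 : 0 < φ 0 := by simpa [hφdef] using hDet0
    have e1 : ∀ᶠ t in nhds (0 : ℝ), 0 < φ t := h1.eventually (eventually_gt_nhds hφ0)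
    have h2 : ContinuousAt (fun t : ℝ => π0 + t * c) 0 := by fun_prop
    have e2 : ∀ᶠ t in nhds (0 : ℝ), 0 < π0 + t * c :=
      h2.eventually (eventually_gt_nhds (by simpa using hπ0pos))
    exact e1.and e2
  set c1 : ℝ := (2 * Real.pi) ^ (-(Fintype.card (Fin D) : ℝ) / 2) with hc1def
  have hc1pos : 0 < c1 := Real.rpow_pos_of_pos (by positivity) _
  set A : ℝ → ℝ := fun t => Real.log (π0 + t * c) +
      (Real.log c1 + -(1 : ℝ) / 2 * Real.log (φ t) +
        -(1 / 2 : ℝ) * (r t ⬝ᵥ (N t *ᵥ r t))) with hAdef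
  have hfeq : (fun t : ℝ =>
      Real.log (piFull (p + t • dπ) k *
        gpdf (y i) ((lam k + t • dl) + (X i)ᵀ *ᵥ (β + t • dβ)) (S k + t • U))) =ᶠ[nhds 0] A := by
    filter_upwards [hev] with t ht
    obtain ⟨h1, h2⟩ := ht
    have hinv : (S k + t • U)⁻¹ = N t := Matrix.nonsing_inv_eq_ringInverse _
    have hdp : (0 : ℝ) < φ t ^ (-(1 : ℝ) / 2) := Real.rpow_pos_of_pos h1 _
    have hexp : (0 : ℝ) < Real.exp (-(1 / 2) * (r t ⬝ᵥ (N t *ᵥ r t))) := Real.exp_pos _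
    rw [hπt t, gpdf, hrt t, hinv]
    rw [Real.log_mul h2.ne' (by positivity), Real.log_mul (by positivity) hexp.ne',
      Real.log_mul hc1pos.ne' hdp.ne', Real.log_exp, Real.log_rpow h1]
  set g : ℝ → ℝ := fun s => c / (π0 + s * c) +
      (-(1 : ℝ) / 2 * Matrix.trace (N s * U) +
        -(1 / 2 : ℝ) * ((-u) ⬝ᵥ (N s *ᵥ r s) + r s ⬝ᵥ (-(N s * U * N s) *ᵥ r s) +
          r s ⬝ᵥ (N s *ᵥ (-u)))) with hgdef
  have hrent : ∀ s : ℝ, ∀ j, HasDerivAt (fun t => r t j) ((-u) j) s := by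
    intro s j
    have := (hasDerivAt_mul_const (x := s) (u j)).const_sub (r0 j)
    simpa [hrdef] using this
  have hNs : ∀ s : ℝ, 0 < φ s → HasDerivAt N (-(N s * U * N s)) s := by
    intro s h1
    exact ringInverse_line_hasDerivAt _ _ _
      ((Matrix.isUnit_iff_isUnit_det _).2 (isUnit_iff_ne_zero.2 h1.ne'))
  have hAd : ∀ᶠ s in nhds (0 : ℝ), HasDerivAt A (g s) s := by
    filter_upwards [hev] with s hs
    obtain ⟨h1, h2⟩ := hs
    have hd1 : HasDerivAt (fun t => Real.log (π0 + t * c)) (c / (π0 + s * c)) s := by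
      have := (((hasDerivAt_mul_const c).const_add π0).log h2.ne')
      exact this
    have hd2 : HasDerivAt (fun t => -(1 : ℝ) / 2 * Real.log (φ t))
        (-(1 : ℝ) / 2 * Matrix.trace (N s * U)) s := by
      have hld := ((det_line_hasDerivAt (S k) U s).log h1.ne').const_mul (-(1 : ℝ) / 2)
      have heq : Matrix.trace (N s * U)
          = Matrix.trace (Matrix.adjugate (S k + s • U) * U) / φ s := by
        have : N s = Ring.inverse ((S k + s • U).det) • Matrix.adjugate (S k + s • U) := by
          simp only [hNdef]
          rw [← Matrix.nonsing_inv_eq_ringInverse, Matrix.inv_def]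
        rw [this, Matrix.smul_mul, Matrix.trace_smul, Ring.inverse_eq_inv, smul_eq_mul,
          div_eq_inv_mul]
      rw [heq]
      exact hld
    have hd3 : HasDerivAt (fun t => -(1 / 2 : ℝ) * (r t ⬝ᵥ (N t *ᵥ r t)))
        (-(1 / 2 : ℝ) * ((-u) ⬝ᵥ (N s *ᵥ r s) + r s ⬝ᵥ (-(N s * U * N s) *ᵥ r s) +
          r s ⬝ᵥ (N s *ᵥ (-u)))) s :=
      (hasDerivAt_vMv (hrent s) (hrent s) (hNs s h1)).const_mul _
    have hdc : HasDerivAt (fun _ : ℝ => Real.log c1) 0 s := hasDerivAt_const _ _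
    have htot := hd1.fun_add ((hdc.fun_add hd2).fun_add hd3)
    rw [hAdef, hgdef]
    simpa [zero_add] using htot
  have hfd : deriv (fun t : ℝ =>
      Real.log (piFull (p + t • dπ) k *
        gpdf (y i) ((lam k + t • dl) + (X i)ᵀ *ᵥ (β + t • dβ)) (S k + t • U))) =ᶠ[nhds 0] g := by
    filter_upwards [hfeq.eventually_nhds, hAd] with s hs hds
    rw [Filter.EventuallyEq.deriv_eq hs, hds.deriv]
  rw [iteratedDeriv_succ, iteratedDeriv_one, hfd.deriv_eq]
  have hφ00 : 0 < φ 0 := by simpa [hφdef] using hDet0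
  have hN0 : HasDerivAt N (-(N 0 * U * N 0)) 0 := hNs 0 hφ00
  have hd1' : HasDerivAt (fun s : ℝ => c / (π0 + s * c))
      ((0 * (π0 + 0 * c) - c * c) / (π0 + 0 * c) ^ 2) 0 :=
    (hasDerivAt_const 0 c).div ((hasDerivAt_mul_const (x := (0 : ℝ)) c).const_add π0)
      (by simpa using hπ0pos.ne')
  have hd2' : HasDerivAt (fun s : ℝ => -(1 : ℝ) / 2 * Matrix.trace (N s * U))
      (-(1 : ℝ) / 2 * Matrix.trace (-(N 0 * U * N 0) * U)) 0 :=
    (hasDerivAt_trace_mul hN0).const_mul _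
  have hP : HasDerivAt (fun s : ℝ => -(N s * U * N s))
      (-(-(N 0 * U * N 0) * U * N 0 + N 0 * U * -(N 0 * U * N 0))) 0 :=
    ((hN0.mul_const U).mul hN0).neg
  have hconst : ∀ j, HasDerivAt (fun t : ℝ => (fun _ : ℝ => -u) t j) ((0 : Fin D → ℝ) j) 0 :=
    fun j => hasDerivAt_const 0 ((-u) j)
  have t1 := hasDerivAt_vMv hconst (hrent 0) hN0
  have t2 := hasDerivAt_vMv (hrent 0) (hrent 0) hP
  have t3 := hasDerivAt_vMv (hrent 0) hconst hN0
  have gbig := hd1'.fun_add (hd2'.fun_add (((t1.fun_add t2).fun_add t3).const_mul (-(1 / 2 : ℝ))))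
  rw [hgdef, gbig.deriv]
  have hr00 : r 0 = r0 := by
    funext j; simp [hrdef]
  have hN00 : N 0 = W := by
    have : N 0 = Ring.inverse (S k + (0 : ℝ) • U) := rfl
    rw [this, zero_smul, add_zero, ← Matrix.nonsing_inv_eq_ringInverse]
  rw [hr00, hN00, ha]
  have hkd : (kronRow b W * dup D) *ᵥ dv = W *ᵥ (U *ᵥ b) := by
    rw [← Matrix.mulVec_mulVec, dup_mulVec, ← hUdef, kronRow_mulVec_vecM, hUsym]
  have hM1 : dβ ⬝ᵥ (X i * W * (X i)ᵀ) *ᵥ dβ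
      = ((X i)ᵀ *ᵥ dβ) ⬝ᵥ (W *ᵥ ((X i)ᵀ *ᵥ dβ)) := by
    rw [← Matrix.mulVec_mulVec, ← Matrix.mulVec_mulVec, dot_shuffle]
  have hM2 : (dl ⊕ᵥ dv) ⬝ᵥ (Fᵀ * (X i)ᵀ) *ᵥ dβ
      = dl ⬝ᵥ (W *ᵥ ((X i)ᵀ *ᵥ dβ)) + ((X i)ᵀ *ᵥ dβ) ⬝ᵥ (W *ᵥ (U *ᵥ b)) := by
    rw [hF, Matrix.transpose_fromCols, ← Matrix.mulVec_mulVec, Matrix.fromRows_mulVec,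
      sumElim_dotProduct_sumElim, hWsym]
    congr 1
    rw [dot_shuffle, Matrix.transpose_transpose, hkd, dotProduct_comm]
  have hM3 : dβ ⬝ᵥ (X i * F) *ᵥ (dl ⊕ᵥ dv)
      = dl ⬝ᵥ (W *ᵥ ((X i)ᵀ *ᵥ dβ)) + ((X i)ᵀ *ᵥ dβ) ⬝ᵥ (W *ᵥ (U *ᵥ b)) := by
    rw [hF, ← Matrix.mulVec_mulVec, Matrix.fromCols_mulVec_sumElim, hkd, dot_shuffle,
      dotProduct_add]
    congr 1
    exact dot_sym hWsym _ _
  have hbUWU : Matrix.trace (Matrix.vecMulVec b b * (U * W * Uᵀ))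
      = b ⬝ᵥ (U *ᵥ (W *ᵥ (U *ᵥ b))) := by
    rw [trace_vecMulVec_mul, Matrix.transpose_mul, Matrix.transpose_transpose,
      Matrix.transpose_mul, hWsym, hUsym, ← Matrix.mulVec_mulVec, ← Matrix.mulVec_mulVec]
  have hM4 : (dl ⊕ᵥ dv) ⬝ᵥ C *ᵥ (dl ⊕ᵥ dv)
      = dl ⬝ᵥ (W *ᵥ dl) + 2 * (dl ⬝ᵥ (W *ᵥ (U *ᵥ b)))
        + (b ⬝ᵥ (U *ᵥ (W *ᵥ (U *ᵥ b)))
          - (1 / 2) * Matrix.trace (W * (U * (W * U)))) := by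
    rw [hC, Matrix.fromBlocks_mulVec, Sum.elim_comp_inl, Sum.elim_comp_inr,
      sumElim_dotProduct_sumElim, hkd, dotProduct_add, dotProduct_add]
    have hB1 : dv ⬝ᵥ ((dup D)ᵀ * (kronRow b W)ᵀ) *ᵥ dl = dl ⬝ᵥ (W *ᵥ (U *ᵥ b)) := by
      rw [← Matrix.mulVec_mulVec, dot_shuffle, Matrix.transpose_transpose, dup_mulVec,
        ← hUdef, dot_shuffle, Matrix.transpose_transpose, kronRow_mulVec_vecM, hUsym,
        dotProduct_comm]
    have hB2 : dv ⬝ᵥ ((1 / 2 : ℝ) • ((dup D)ᵀ * ((W - (2 : ℝ) • Bm) ⊗ₖ W) * dup D)) *ᵥ dv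
        = (1 / 2) * (2 * (b ⬝ᵥ (U *ᵥ (W *ᵥ (U *ᵥ b))))
            - Matrix.trace (W * (U * (W * U)))) := by
      rw [Matrix.smul_mulVec, dotProduct_smul, smul_eq_mul]
      rw [← Matrix.mulVec_mulVec, ← Matrix.mulVec_mulVec, dup_mulVec, ← hUdef,
        dot_shuffle, Matrix.transpose_transpose, dup_mulVec, ← hUdef, kron_quad]
      rw [hBm]
      rw [Matrix.transpose_sub, Matrix.transpose_smul, Matrix.transpose_sub, hWsym,
        vecMulVec_self_transpose]
      simp only [Matrix.sub_mul, Matrix.smul_mul, Matrix.trace_sub, Matrix.trace_smul,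
        smul_eq_mul]
      rw [hbUWU]
      rw [hUsym]
      simp only [Matrix.mul_assoc]
      ring
    rw [hB1, hB2]
    ring
  rw [hM1, hM2, hM3, hM4]
  have hr0W : ∀ z : Fin D → ℝ, r0 ⬝ᵥ (W *ᵥ z) = b ⬝ᵥ z := fun z => by
    rw [dot_shuffle, hWsym, ← hb]
  have hL1 : (0 * (π0 + 0 * c) - c * c) / (π0 + 0 * c) ^ 2 = -(c / π0) ^ 2 := by
    ring
  have hL2 : (-(W * U * W) * U).trace = -(W * (U * (W * U))).trace := by
    simp only [Matrix.neg_mul, Matrix.trace_neg, Matrix.mul_assoc]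
  have h01 : (0 : Fin D → ℝ) ⬝ᵥ W *ᵥ r0 = 0 := zero_dotProduct _
  have h02 : r0 ⬝ᵥ W *ᵥ (0 : Fin D → ℝ) = 0 := by
    rw [Matrix.mulVec_zero, dotProduct_zero]
  have h1 : -u ⬝ᵥ -(W * U * W) *ᵥ r0
      = dl ⬝ᵥ (W *ᵥ (U *ᵥ b)) + ((X i)ᵀ *ᵥ dβ) ⬝ᵥ (W *ᵥ (U *ᵥ b)) := by
    rw [neg_dotProduct, Matrix.neg_mulVec, dotProduct_neg, neg_neg]
    rw [← Matrix.mulVec_mulVec, ← Matrix.mulVec_mulVec, ← hb, hudef, add_dotProduct]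
  have h2 : -u ⬝ᵥ W *ᵥ -u
      = dl ⬝ᵥ (W *ᵥ dl) + 2 * (dl ⬝ᵥ (W *ᵥ ((X i)ᵀ *ᵥ dβ)))
        + ((X i)ᵀ *ᵥ dβ) ⬝ᵥ (W *ᵥ ((X i)ᵀ *ᵥ dβ)) := by
    rw [neg_dotProduct, Matrix.mulVec_neg, dotProduct_neg, neg_neg, hudef]
    rw [add_dotProduct, Matrix.mulVec_add, dotProduct_add, dotProduct_add]
    rw [dot_sym hWsym ((X i)ᵀ *ᵥ dβ) dl]
    ring
  have h3 : r0 ⬝ᵥ -(-(W * U * W) * U * W + W * U * -(W * U * W)) *ᵥ r0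
      = 2 * (b ⬝ᵥ (U *ᵥ (W *ᵥ (U *ᵥ b)))) := by
    simp only [Matrix.neg_mul, Matrix.mul_neg, neg_neg, neg_add, Matrix.neg_mulVec,
      Matrix.add_mulVec, dotProduct_add, dotProduct_neg, neg_neg,
      ← Matrix.mulVec_mulVec]
    rw [← hb, hr0W]
    ring
  have h4 : r0 ⬝ᵥ -(W * U * W) *ᵥ -u
      = dl ⬝ᵥ (W *ᵥ (U *ᵥ b)) + ((X i)ᵀ *ᵥ dβ) ⬝ᵥ (W *ᵥ (U *ᵥ b)) := by
    rw [Matrix.neg_mulVec, Matrix.mulVec_neg, dotProduct_neg, dotProduct_neg,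
      neg_neg]
    rw [← Matrix.mulVec_mulVec, ← Matrix.mulVec_mulVec, hr0W, dot_shuffle, hUsym,
      dot_sym hWsym, hudef, add_dotProduct]
  rw [hL1, hL2, h01, h02, h1, h2, h3, h4]
  ring
end
end
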